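/- Let A be a finite alphabet and k a positive integer. If X ⊆ A* is a regular language, then the set ⟮F_k minus the diagonal⟯(X) = {w' ∈ A* : ∃ w ∈ X, w ≠ w' and d_F(w,w') ≤ k} is a regular language over A. -/

import Mathlib

open scoped ENNReal

/-- Length of a longest common prefix of `w` and `w'`. -/
noncomputable def lcpLen {A : Type*} (w w' : List A) : ℕ :=
  sSup {n | ∃ p : List A, p.length = n ∧ p <+: w ∧ p <+: w'}

/-- The prefix distance `d_P(w,w') = |w| + |w'| - 2|w ∧ w'|`. -/
noncomputable def dP {A : Type*} (w w' : List A) : ℕ :=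
  w.length + w'.length - 2 * lcpLen w w'

/-- Length of a longest common suffix of `w` and `w'`. -/
noncomputable def lcsLen {A : Type*} (w w' : List A) : ℕ :=
  sSup {n | ∃ s : List A, s.length = n ∧ s <:+ w ∧ s <:+ w'}

/-- The suffix distance `d_S(w,w') = |w| + |w'| - 2|s|`. -/
noncomputable def dS {A : Type*} (w w' : List A) : ℕ :=
  w.length + w'.length - 2 * lcsLen w w'

/-- Length of a longest common factor of `w` and `w'`. -/
noncomputable def lcfLen {A : Type*} (w w' : List A) : ℕ :=
  sSup {n | ∃ f : List A, f.length = n ∧ f <:+: w ∧ f <:+: w'}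

/-- The factor distance `d_F(w,w') = |w| + |w'| - 2|f|`,
`f` a maximum-length common factor. -/
noncomputable def dF {A : Type*} (w w' : List A) : ℕ :=
  w.length + w'.length - 2 * lcfLen w w'

/-- `n`-fold composition of a binary relation. -/
def relPow {α : Type*} (r : α → α → Prop) : ℕ → α → α → Prop
  | 0 => Eq
  | n + 1 => Relation.Comp (relPow r n) r

/-- `X` is a (variable-length) code: every word of `X*` factorizes uniquely over `X`. -/
def IsCode {A : Type*} (X : Set (List A)) : Prop :=
  ∀ l m : List (List A), (∀ x ∈ l, x ∈ X) → (∀ x ∈ m, x ∈ X) →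
    l.flatten = m.flatten → l = m

/-- `X` is complete: every word is a factor of some word of `X*`. -/
def IsCompleteSet {A : Type*} (X : Set (List A)) : Prop :=
  ∀ w : List A, ∃ l : List (List A), (∀ x ∈ l, x ∈ X) ∧ w <:+: l.flatten

/-- `X ⊆ A*` is a regular language: accepted by a finite deterministic automaton. -/
def IsRegularLang {A : Type*} (X : Set (List A)) : Prop :=
  ∃ (Q : Type) (_ : Fintype Q) (M : DFA A Q), M.accepts = X

/-- The uniform Bernoulli measure `μ(X) = Σ_{x ∈ X} |A|^{-|x|}`. -/
noncomputable def mu (A : Type*) [Fintype A] (X : Set (List A)) : ℝ≥0∞ :=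
  ∑' x : X, ((Fintype.card A : ℝ≥0∞))⁻¹ ^ (x : List A).length

namespace RegAux

theorem key_prod {A : Type*} {Q1 Q2 : Type} (M1 : DFA A Q1) (M2 : DFA A Q2)
    (st : Q1 × Q2) (acc : Set (Q1 × Q2)) :
    ∀ (x : List A) (q1 : Q1) (q2 : Q2),
      (DFA.mk (fun (p : Q1 × Q2) a => (M1.step p.1 a, M2.step p.2 a)) st acc).evalFrom
        (q1, q2) x = (M1.evalFrom q1 x, M2.evalFrom q2 x) := by
  intro x
  induction x with
  | nil => intro q1 q2; rfl
  | cons a x ih => intro q1 q2; simpa [DFA.evalFrom] using ih (M1.step q1 a) (M2.step q2 a)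

/-- Closure under pointwise boolean combinations. -/
theorem reg_comb {A : Type*} {X Y : Set (List A)} (c : Prop → Prop → Prop)
    (hX : IsRegularLang X) (hY : IsRegularLang Y) :
    IsRegularLang {w | c (w ∈ X) (w ∈ Y)} := by
  obtain ⟨Q1, f1, M1, h1⟩ := hX
  obtain ⟨Q2, f2, M2, h2⟩ := hY
  refine ⟨Q1 × Q2, inferInstance, ⟨fun p a => (M1.step p.1 a, M2.step p.2 a),
    (M1.start, M2.start), {p | c (p.1 ∈ M1.accept) (p.2 ∈ M2.accept)}⟩, ?_⟩
  ext w
  simp only [DFA.mem_accepts, DFA.eval, key_prod, Set.mem_setOf_eq]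
  rw [← h1, ← h2]
  rfl

theorem reg_union {A : Type*} {X Y : Set (List A)} (hX : IsRegularLang X)
    (hY : IsRegularLang Y) : IsRegularLang (X ∪ Y) := by
  have := reg_comb (fun p q => p ∨ q) hX hY
  convert this using 1
  rfl

theorem reg_diff {A : Type*} {X Y : Set (List A)} (hX : IsRegularLang X)
    (hY : IsRegularLang Y) : IsRegularLang (X \ Y) := by
  have := reg_comb (fun p q => p ∧ ¬ q) hX hY
  convert this using 1
  rfl

theorem reg_empty {A : Type*} : IsRegularLang (∅ : Set (List A)) :=
  ⟨Unit, inferInstance, ⟨fun _ _ => (), (), ∅⟩, rfl⟩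

theorem reg_univ {A : Type*} : IsRegularLang (Set.univ : Set (List A)) :=
  ⟨Unit, inferInstance, ⟨fun _ _ => (), (), Set.univ⟩, rfl⟩

theorem reg_congr {A : Type*} {X Y : Set (List A)} (h : X = Y) (hX : IsRegularLang X) :
    IsRegularLang Y := h ▸ hX

theorem reg_biUnion {A : Type*} {ι : Type*} {s : Set ι} (hs : s.Finite)
    {f : ι → Set (List A)} (hf : ∀ i ∈ s, IsRegularLang (f i)) :
    IsRegularLang (⋃ i ∈ s, f i) := by
  induction s, hs using Set.Finite.induction_on with
  | empty => simpa using reg_empty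
  | @insert a s ha hs ih =>
      rw [Set.biUnion_insert]
      exact reg_union (hf a (Set.mem_insert a s)) (ih fun i hi => hf i (Set.mem_insert_of_mem a hi))

/-- two-sided quotient -/
theorem reg_midQuot {A : Type*} {X : Set (List A)} (hX : IsRegularLang X) (u v : List A) :
    IsRegularLang {f | u ++ f ++ v ∈ X} := by
  obtain ⟨Q, fQ, M, hM⟩ := hX
  refine ⟨Q, fQ, ⟨M.step, M.evalFrom M.start u, {q | M.evalFrom q v ∈ M.accept}⟩, ?_⟩
  ext f
  have h1 : ∀ (st : Q) acc (x : List A) (q : Q),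
      (DFA.mk M.step st acc).evalFrom q x = M.evalFrom q x := fun _ _ x => by
    induction x with
    | nil => intro q; rfl
    | cons a x ih => intro q; simpa [DFA.evalFrom] using ih (M.step q a)
  simp only [DFA.mem_accepts, DFA.eval, h1, Set.mem_setOf_eq, ← hM]
  rw [← DFA.evalFrom_of_append, ← DFA.evalFrom_of_append]
  simp only [List.append_assoc]
  exact Iff.rfl

open Classical

/-- prepend a single letter -/
theorem reg_consLeft {A : Type*} {L : Set (List A)} (hL : IsRegularLang L) (a : A) :
    IsRegularLang {w | ∃ f ∈ L, w = a :: f} := by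
  obtain ⟨Q, fQ, M, hM⟩ := hL
  classical
  let N : DFA A (Option (Option Q)) :=
    ⟨fun s b => match s with
      | none => none
      | some none => if b = a then some (some M.start) else none
      | some (some q) => some (some (M.step q b)),
      some none, {s | ∃ q ∈ M.accept, s = some (some q)}⟩
  refine ⟨Option (Option Q), inferInstance, N, ?_⟩
  have hdead : ∀ x : List A, N.evalFrom none x = none := by
    intro x; induction x with
    | nil => rfl
    | cons b x ih => simpa [DFA.evalFrom, N] using ih
  have hrun : ∀ (x : List A) (q : Q), N.evalFrom (some (some q)) x = some (some (M.evalFrom q x)) := by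
    intro x; induction x with
    | nil => intro q; rfl
    | cons b x ih => intro q; simpa [DFA.evalFrom, N] using ih (M.step q b)
  ext w
  simp only [DFA.mem_accepts, Set.mem_setOf_eq]
  constructor
  · intro h
    obtain ⟨q, hq, hs⟩ := h
    match w with
    | [] => simp [DFA.eval, N] at hs
    | b :: x =>
      have : N.eval (b :: x) = N.evalFrom (if b = a then some (some M.start) else none) x := rfl
      by_cases hb : b = a
      · subst hb
        rw [this, if_pos rfl, hrun] at hs
        obtain rfl : q = M.eval x := by
          simpa [DFA.eval] using hs.symm
        exact ⟨x, by rw [← hM]; exact hq, rfl⟩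
      · rw [this, if_neg hb, hdead] at hs; simp at hs
  · rintro ⟨f, hf, rfl⟩
    have : N.eval (a :: f) = N.evalFrom (some (some M.start)) f := by
      simp [DFA.eval, DFA.evalFrom, N]
    rw [this, hrun]
    rw [← hM] at hf
    exact ⟨M.eval f, hf, rfl⟩

/-- prepend a fixed word -/
theorem reg_appendLeft {A : Type*} {L : Set (List A)} (hL : IsRegularLang L) (u : List A) :
    IsRegularLang {w | ∃ f ∈ L, w = u ++ f} := by
  induction u with
  | nil =>
      convert hL using 1
      ext w; simp
  | cons a u ih =>
      have h2 := reg_consLeft ih a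
      convert h2 using 1
      ext w
      simp only [Set.mem_setOf_eq]
      constructor
      · rintro ⟨f, hf, rfl⟩; exact ⟨u ++ f, ⟨f, hf, rfl⟩, rfl⟩
      · rintro ⟨g, ⟨f, hf, rfl⟩, rfl⟩; exact ⟨f, hf, rfl⟩

/-- append a single letter -/
theorem reg_snocRight {A : Type*} {L : Set (List A)} (hL : IsRegularLang L) (a : A) :
    IsRegularLang {w | ∃ f ∈ L, w = f ++ [a]} := by
  obtain ⟨Q, fQ, M, hM⟩ := hL
  classical
  let N : DFA A (Q × Bool) :=
    ⟨fun s b => (M.step s.1 b, decide (b = a ∧ s.1 ∈ M.accept)), (M.start, false),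
      {s | s.2 = true}⟩
  refine ⟨Q × Bool, inferInstance, N, ?_⟩
  have key : ∀ w : List A, N.eval w = (M.eval w, decide (∃ f ∈ L, w = f ++ [a])) := by
    intro w
    induction w using List.reverseRecOn with
    | nil =>
        simp only [DFA.eval_nil]
        have : ¬ ∃ f ∈ L, ([] : List A) = f ++ [a] := by
          rintro ⟨f, _, h⟩; simpa using h.symm
        simp [N, this]
    | append_singleton x c ih =>
        rw [DFA.eval_append_singleton, ih, DFA.eval_append_singleton]
        have : (c = a ∧ M.eval x ∈ M.accept) ↔ (∃ f ∈ L, x ++ [c] = f ++ [a]) := by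
          constructor
          · rintro ⟨rfl, hx⟩; exact ⟨x, by rw [← hM]; exact hx, rfl⟩
          · rintro ⟨f, hf, he⟩
            obtain ⟨rfl, rfl⟩ : x = f ∧ c = a := by
              have := List.append_inj' he rfl
              simpa using this
            exact ⟨rfl, by rw [← hM] at hf; exact hf⟩
        simp [N, this]
  ext w
  simp only [DFA.mem_accepts, key, Set.mem_setOf_eq]
  simp only [N, Set.mem_setOf_eq, decide_eq_true_eq]
  exact Iff.rfl

/-- append a fixed word -/
theorem reg_appendRight {A : Type*} {L : Set (List A)} (hL : IsRegularLang L) (v : List A) :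
    IsRegularLang {w | ∃ f ∈ L, w = f ++ v} := by
  induction v generalizing L with
  | nil => simpa using hL
  | cons a v ih =>
      have h1 := reg_snocRight hL a
      have h2 := ih h1
      convert h2 using 1
      ext w
      simp only [Set.mem_setOf_eq]
      constructor
      · rintro ⟨f, hf, rfl⟩
        exact ⟨f ++ [a], ⟨f, hf, rfl⟩, by simp⟩
      · rintro ⟨g, ⟨f, hf, rfl⟩, rfl⟩
        exact ⟨f, hf, by simp⟩

/-- surround with fixed words -/
theorem reg_surround {A : Type*} {L : Set (List A)} (hL : IsRegularLang L) (u v : List A) :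
    IsRegularLang {w | ∃ f ∈ L, w = u ++ f ++ v} := by
  have h1 := reg_appendRight (reg_appendLeft hL u) v
  convert h1 using 1
  ext w
  simp only [Set.mem_setOf_eq]
  constructor
  · rintro ⟨f, hf, rfl⟩; exact ⟨u ++ f, ⟨f, hf, rfl⟩, rfl⟩
  · rintro ⟨g, ⟨f, hf, rfl⟩, rfl⟩; exact ⟨f, hf, rfl⟩

/-- `t^n` -/
def trep {A : Type*} (t : List A) : ℕ → List A
  | 0 => []
  | n + 1 => t ++ trep t n

theorem trep_comm {A : Type*} (t : List A) (n : ℕ) : t ++ trep t n = trep t n ++ t := by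
  induction n with
  | zero => simp [trep]
  | succ n ih =>
      show t ++ (t ++ trep t n) = (t ++ trep t n) ++ t
      calc t ++ (t ++ trep t n) = t ++ (trep t n ++ t) := by rw [ih]
        _ = (t ++ trep t n) ++ t := by rw [List.append_assoc]

theorem conj_extend {A : Type*} (t r : List A) (n : ℕ) (p : List A)
    (h : t ++ p = p ++ r) : t ++ (trep t n ++ p) = (trep t n ++ p) ++ r := by
  induction n with
  | zero => simpa [trep] using h
  | succ n ih =>
      simp only [trep, List.append_assoc] at ih ⊢
      rw [ih]

theorem conj_cancel {A : Type*} (t r : List A) (n : ℕ) (p : List A)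
    (h : t ++ (trep t n ++ p) = (trep t n ++ p) ++ r) : t ++ p = p ++ r := by
  have h1 : t ++ (trep t n ++ p) = trep t n ++ (t ++ p) := by
    rw [← List.append_assoc, trep_comm, List.append_assoc]
  rw [h1, List.append_assoc] at h
  exact List.append_cancel_left h

/-- Word combinatorics: solutions of `t ++ f = f ++ r` with `t ≠ []`. -/
theorem conj_solution {A : Type*} (t : List A) (ht : t ≠ []) (f r : List A)
    (h : t ++ f = f ++ r) :
    ∃ n p, p <+: t ∧ p.length < t.length ∧ f = trep t n ++ p := by
  by_cases hlt : f.length < t.length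
  · refine ⟨0, f, ?_, hlt, by simp [trep]⟩
    have h1 : f <+: t ++ f := ⟨r, h.symm⟩
    rw [List.prefix_iff_eq_take] at h1
    rw [List.take_append_of_le_length hlt.le] at h1
    exact h1 ▸ List.take_prefix f.length t
  · push_neg at hlt
    have htf : t <+: f := by
      apply List.prefix_of_prefix_length_le _ (List.prefix_append f r) hlt
      rw [← h]
      exact List.prefix_append t f
    obtain ⟨g, hg⟩ := htf
    have hlen : g.length < f.length := by
      rw [← hg, List.length_append]
      have : 0 < t.length := List.length_pos_iff.mpr ht
      omega
    have h2 : t ++ g = g ++ r := by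
      apply List.append_cancel_left (as := t)
      have h' : t ++ (t ++ g) = (t ++ g) ++ r := by rw [hg]; exact h
      rw [h', List.append_assoc]
    obtain ⟨n, p, hp1, hp2, hp3⟩ := conj_solution t ht g r h2
    refine ⟨n + 1, p, hp1, hp2, ?_⟩
    rw [← hg, hp3, trep, List.append_assoc]
termination_by f.length
decreasing_by exact hlen

/-- the language `{f | t ++ f = f ++ r}` is regular -/
theorem reg_conjLang {A : Type*} (t r : List A) :
    IsRegularLang {f : List A | t ++ f = f ++ r} := by
  rcases eq_or_ne t [] with rfl | ht
  · by_cases hr : r = []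
    · subst hr
      have : {f : List A | [] ++ f = f ++ []} = Set.univ := by ext f; simp
      rw [this]; exact reg_univ
    · have : {f : List A | [] ++ f = f ++ r} = ∅ := by
        ext f
        simp only [List.nil_append, Set.mem_setOf_eq, Set.mem_empty_iff_false, iff_false]
        intro hf
        exact hr (List.self_eq_append_right.mp hf)
      rw [this]; exact reg_empty
  · have pos : 0 < t.length := List.length_pos_iff.mpr ht
    classical
    let N : DFA A (Option (Fin t.length)) :=
      ⟨fun x b => match x with
        | none => none
        | some i => if t.get i = b then some ⟨(i.val + 1) % t.length, Nat.mod_lt _ pos⟩ else none,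
        some ⟨0, pos⟩,
        {x | ∃ i : Fin t.length, x = some i ∧ t ++ t.take i.val = t.take i.val ++ r}⟩
    refine ⟨Option (Fin t.length), inferInstance, N, ?_⟩
    have C1 : ∀ i (hi : i ≤ t.length),
        N.eval (t.take i) = some ⟨i % t.length, Nat.mod_lt _ pos⟩ := by
      intro i
      induction i with
      | zero =>
          intro hi
          show some (⟨0, pos⟩ : Fin t.length) = _
          congr 1
      | succ i ih =>
          intro hi
          have hi' : i < t.length := hi
          have hstep : t.take (i + 1) = t.take i ++ [t.get ⟨i, hi'⟩] := by
            rw [List.get_eq_getElem, ← List.take_concat_get hi', List.concat_eq_append]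
          rw [hstep, DFA.eval_append_singleton, ih (le_of_lt hi')]
          have hmm : (⟨i % t.length, Nat.mod_lt _ pos⟩ : Fin t.length) = ⟨i, hi'⟩ :=
            Fin.ext (Nat.mod_eq_of_lt hi')
          rw [hmm]
          show (if t.get ⟨i, hi'⟩ = t.get ⟨i, hi'⟩ then some (⟨(i + 1) % t.length,
            Nat.mod_lt _ pos⟩ : Fin t.length) else none) = _
          rw [if_pos rfl]
    have C2 : N.eval t = some ⟨0, pos⟩ := by
      have := C1 t.length le_rfl
      rw [List.take_length] at this
      rw [this]
      congr 1
      exact Fin.ext (Nat.mod_self _)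
    have C3 : ∀ z : List A, N.eval (t ++ z) = N.eval z := by
      intro z
      show N.evalFrom N.start (t ++ z) = _
      rw [DFA.evalFrom_of_append]
      have hst : N.evalFrom N.start t = N.start := C2
      rw [hst]
      rfl
    have C4 : ∀ n (z : List A), N.eval (trep t n ++ z) = N.eval z := by
      intro n
      induction n with
      | zero => intro z; simp [trep]
      | succ n ih => intro z; rw [trep, List.append_assoc, C3, ih]
    have C5 : ∀ (f : List A) (i : Fin t.length), N.eval f = some i →
        ∃ n, f = trep t n ++ t.take i.val := by
      intro f
      induction f using List.reverseRecOn with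
      | nil =>
          intro i hi
          have h0 : some (⟨0, pos⟩ : Fin t.length) = some i := hi
          obtain rfl : (⟨0, pos⟩ : Fin t.length) = i := Option.some_inj.mp h0
          exact ⟨0, by simp [trep]⟩
      | append_singleton x a ih =>
          intro i hi
          rw [DFA.eval_append_singleton] at hi
          cases hev : N.eval x with
          | none =>
              rw [hev] at hi
              cases hi
          | some j =>
              rw [hev] at hi
              have hstep : (if t.get j = a then some (⟨(j.val + 1) % t.length,
                  Nat.mod_lt _ pos⟩ : Fin t.length) else none) = some i := hi
              by_cases hja : t.get j = a
              · rw [if_pos hja] at hstep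
                have hi' : i = ⟨(j.val + 1) % t.length, Nat.mod_lt _ pos⟩ :=
                  (Option.some_inj.mp hstep).symm
                have hja' : t[j.val] = a := by rw [← List.get_eq_getElem]; exact hja
                obtain ⟨n, rfl⟩ := ih j hev
                by_cases hlt : j.val + 1 < t.length
                · refine ⟨n, ?_⟩
                  rw [List.append_assoc]
                  congr 1
                  rw [← hja', ← List.concat_eq_append, List.take_concat_get j.isLt]
                  rw [hi']
                  show t.take (j.val + 1) = t.take ((j.val + 1) % t.length)
                  rw [Nat.mod_eq_of_lt hlt]
                · have heq : j.val + 1 = t.length := by omega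
                  refine ⟨n + 1, ?_⟩
                  have hi0 : i.val = 0 := by
                    rw [hi']
                    show (j.val + 1) % t.length = 0
                    rw [heq, Nat.mod_self]
                  rw [hi0]
                  show trep t n ++ t.take j.val ++ [a] = trep t (n + 1) ++ t.take 0
                  rw [List.take_zero, List.append_nil, trep, trep_comm, List.append_assoc]
                  congr 1
                  rw [← hja', ← List.concat_eq_append, List.take_concat_get j.isLt, heq,
                    List.take_length]
              · rw [if_neg hja] at hstep
                cases hstep
    ext f
    rw [DFA.mem_accepts]
    constructor
    · rintro ⟨i, hei, hcond⟩
      obtain ⟨n, rfl⟩ := C5 f i hei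
      exact conj_extend t r n _ hcond
    · intro hf
      obtain ⟨n, p, hp, hplen, rfl⟩ := conj_solution t ht _ r hf
      have hpt : p = t.take p.length := List.prefix_iff_eq_take.mp hp
      have hcond : t ++ t.take p.length = t.take p.length ++ r := by
        rw [← hpt]
        exact conj_cancel t r n p hf
      refine ⟨⟨p.length, hplen⟩, ?_, hcond⟩
      show N.eval (trep t n ++ p) = _
      rw [C4 n p]
      conv_lhs => rw [hpt]
      rw [C1 p.length hplen.le]
      congr 1
      exact Fin.ext (Nat.mod_eq_of_lt hplen)

/-- auxiliary: the case `|u| ≤ |u'|` -/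
theorem reg_eqFactorSet_aux {A : Type*} (u v u' v' : List A) (hle : u.length ≤ u'.length) :
    IsRegularLang {f : List A | u ++ f ++ v = u' ++ f ++ v'} := by
  by_cases hp : u <+: u'
  · obtain ⟨t, rfl⟩ := hp
    have hred : {f : List A | u ++ f ++ v = u ++ t ++ f ++ v'}
        = {f : List A | f ++ v = t ++ (f ++ v')} := by
      ext f
      simp only [Set.mem_setOf_eq, List.append_assoc, List.append_right_inj]
    rw [hred]
    by_cases hlen : v.length = t.length + v'.length
    · by_cases hdrop : v.drop t.length = v'
      · have hs : v = v.take t.length ++ v' := by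
          conv_lhs => rw [← List.take_append_drop t.length v]
          rw [hdrop]
        have hlens : (v.take t.length).length = t.length := by
          rw [List.length_take]
          omega
        have hred2 : {f : List A | f ++ v = t ++ (f ++ v')}
            = {f : List A | t ++ f = f ++ v.take t.length} := by
          ext f
          simp only [Set.mem_setOf_eq]
          constructor
          · intro h
            have h' : (f ++ v.take t.length) ++ v' = (t ++ f) ++ v' := by
              rw [List.append_assoc, ← hs, h, List.append_assoc]
            have := List.append_inj h' (by simp only [List.length_append, hlens]; omega)
            exact this.1.symm
          · intro h
            rw [hs, ← List.append_assoc, ← h, List.append_assoc]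
        rw [hred2]
        exact reg_conjLang t (v.take t.length)
      · have : {f : List A | f ++ v = t ++ (f ++ v')} = ∅ := by
          ext f
          simp only [Set.mem_setOf_eq, Set.mem_empty_iff_false, iff_false]
          intro h
          apply hdrop
          have h' : (f ++ v.take t.length) ++ v.drop t.length = (t ++ f) ++ v' := by
            rw [List.append_assoc, List.take_append_drop, h, List.append_assoc]
          have hl : (f ++ v.take t.length).length = (t ++ f).length := by
            simp only [List.length_append, List.length_take]
            omega
          exact (List.append_inj h' hl).2
        rw [this]; exact reg_empty
    · have : {f : List A | f ++ v = t ++ (f ++ v')} = ∅ := by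
        ext f
        simp only [Set.mem_setOf_eq, Set.mem_empty_iff_false, iff_false]
        intro h
        apply hlen
        have := congrArg List.length h
        simp only [List.length_append] at this
        omega
      rw [this]; exact reg_empty
  · have : {f : List A | u ++ f ++ v = u' ++ f ++ v'} = ∅ := by
      ext f
      simp only [Set.mem_setOf_eq, Set.mem_empty_iff_false, iff_false]
      intro h
      apply hp
      apply List.prefix_of_prefix_length_le (l₃ := u' ++ f ++ v') _ _ hle
      · exact ⟨f ++ v, by rw [← List.append_assoc, h]⟩
      · exact ⟨f ++ v', (List.append_assoc u' f v').symm⟩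
    rw [this]; exact reg_empty

theorem reg_eqFactorSet {A : Type*} (u v u' v' : List A) :
    IsRegularLang {f : List A | u ++ f ++ v = u' ++ f ++ v'} := by
  rcases le_total u.length u'.length with hle | hle
  · exact reg_eqFactorSet_aux u v u' v' hle
  · have : {f : List A | u ++ f ++ v = u' ++ f ++ v'}
        = {f : List A | u' ++ f ++ v' = u ++ f ++ v} := by
      ext f; simp only [Set.mem_setOf_eq]; exact eq_comm
    rw [this]
    exact reg_eqFactorSet_aux u' v' u v hle

end RegAux


open RegAux in
theorem stmt_10 {A : Type*} [Fintype A] (hA : 2 ≤ Fintype.card A)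
    (k : ℕ) (hk : 1 ≤ k) (X : Set (List A)) (hX : IsRegularLang X) :
    IsRegularLang {w' : List A | ∃ w ∈ X, w ≠ w' ∧ dF w w' ≤ k} := by
  classical
  have key : {w' : List A | ∃ w ∈ X, w ≠ w' ∧ dF w w' ≤ k}
      = ⋃ q ∈ {q : (List A × List A) × (List A × List A) |
          q.1.1.length + q.1.2.length + q.2.1.length + q.2.2.length ≤ k},
        {w' : List A | ∃ f ∈ ({f : List A | q.1.1 ++ f ++ q.1.2 ∈ X} \
            {f : List A | q.1.1 ++ f ++ q.1.2 = q.2.1 ++ f ++ q.2.2}),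
          w' = q.2.1 ++ f ++ q.2.2} := by
    ext w'
    simp only [Set.mem_setOf_eq, Set.mem_iUnion]
    constructor
    · rintro ⟨w, hwX, hne, hdF⟩
      have hbdd : BddAbove {n | ∃ f : List A, f.length = n ∧ f <:+: w ∧ f <:+: w'} :=
        ⟨w.length, by rintro n ⟨f, hf, h1, -⟩; exact hf ▸ h1.length_le⟩
      have hne0 : {n | ∃ f : List A, f.length = n ∧ f <:+: w ∧ f <:+: w'}.Nonempty :=
        ⟨0, [], rfl, List.nil_infix, List.nil_infix⟩
      have hmem := Nat.sSup_mem hne0 hbdd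
      obtain ⟨f, hflen, hfw, hfw'⟩ := hmem
      have hflen' : f.length = lcfLen w w' := hflen
      obtain ⟨u, v, huv⟩ := hfw
      obtain ⟨u', v', huv'⟩ := hfw'
      refine ⟨⟨⟨u, v⟩, ⟨u', v'⟩⟩, ?_, f, ⟨?_, ?_⟩, ?_⟩
      · have hw : w.length = u.length + f.length + v.length := by
          rw [← huv]; simp only [List.length_append, Nat.add_assoc]
        have hw' : w'.length = u'.length + f.length + v'.length := by
          rw [← huv']; simp only [List.length_append, Nat.add_assoc]
        have hdf : dF w w' = w.length + w'.length - 2 * lcfLen w w' := rfl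
        simp only [Set.mem_setOf_eq]
        omega
      · show u ++ f ++ v ∈ X
        rw [huv]; exact hwX
      · show ¬ (u ++ f ++ v = u' ++ f ++ v')
        intro hEq
        exact hne (by rw [← huv, ← huv', hEq])
      · exact huv'.symm
    · rintro ⟨⟨⟨u, v⟩, ⟨u', v'⟩⟩, hq, f, ⟨hfX, hfne⟩, rfl⟩
      simp only [Set.mem_setOf_eq] at hq hfX hfne
      refine ⟨u ++ f ++ v, hfX, hfne, ?_⟩
      have hbdd : BddAbove {n | ∃ g : List A,
          g.length = n ∧ g <:+: u ++ f ++ v ∧ g <:+: u' ++ f ++ v'} :=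
        ⟨(u ++ f ++ v).length, by rintro n ⟨g, hg, h1, -⟩; exact hg ▸ h1.length_le⟩
      have hle : f.length ≤ lcfLen (u ++ f ++ v) (u' ++ f ++ v') :=
        le_csSup hbdd ⟨f, rfl, ⟨u, v, rfl⟩, ⟨u', v', rfl⟩⟩
      have hdf : dF (u ++ f ++ v) (u' ++ f ++ v')
          = (u ++ f ++ v).length + (u' ++ f ++ v').length
            - 2 * lcfLen (u ++ f ++ v) (u' ++ f ++ v') := rfl
      simp only [List.length_append] at hdf
      show dF (u ++ f ++ v) (u' ++ f ++ v') ≤ k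
      omega
  rw [key]
  apply reg_biUnion
  · apply Set.Finite.subset
      (Set.Finite.prod
        (Set.Finite.prod (List.finite_length_le A k) (List.finite_length_le A k))
        (Set.Finite.prod (List.finite_length_le A k) (List.finite_length_le A k)))
    rintro ⟨⟨u, v⟩, ⟨u', v'⟩⟩ hq
    simp only [Set.mem_setOf_eq] at hq
    simp only [Set.mem_prod, Set.mem_setOf_eq]
    omega
  · rintro ⟨⟨u, v⟩, ⟨u', v'⟩⟩ hq
    exact reg_surround (reg_diff (reg_midQuot hX u v) (reg_eqFactorSet u v u' v')) u' v'
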